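/- Let G be a finite simple graph, let ℓ ≥ 0 be an integer, and let M be a matching in G that has no M-augmenting path of length at most 2ℓ−1. Let Γ be a collection of pairwise vertex-disjoint M-augmenting paths of length 2ℓ+1 that is maximal, in the sense that every M-augmenting path of length 2ℓ+1 in G shares a vertex with some path in Γ. Let M' be the symmetric difference of M with the union of the edge sets of the paths in Γ. Then M' is a matching and there is no M'-augmenting path of length at most 2ℓ+1. -/

import Mathlib

/-- A vertex is covered by a set of edges if it lies in one of them. -/
def CoveredBy {V : Type*} (M : Set (Sym2 V)) (v : V) : Prop :=
  ∃ e ∈ M, v ∈ e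

/-- A matching of `G`: a set of edges of `G`, no two of which share an endpoint. -/
def IsMatching {V : Type*} (G : SimpleGraph V) (M : Set (Sym2 V)) : Prop :=
  M ⊆ G.edgeSet ∧ ∀ e ∈ M, ∀ f ∈ M, e ≠ f → ∀ v : V, v ∈ e → v ∉ f

/-- An `M`-augmenting walk of length `2k+1` in `G`, encoded by its vertex sequence
`w 0, w 1, …, w (2k+1)`: consecutive vertices are adjacent, the first and last vertices
are not covered by `M`, and the edges lie alternately outside `M` and in `M`. -/
def IsAugWalk {V : Type*} (G : SimpleGraph V) (M : Set (Sym2 V)) (k : ℕ) (w : ℕ → V) : Prop :=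
  (∀ i < 2 * k + 1, G.Adj (w i) (w (i + 1))) ∧
  ¬ CoveredBy M (w 0) ∧ ¬ CoveredBy M (w (2 * k + 1)) ∧
  (∀ i, 2 * i < 2 * k + 1 → s(w (2 * i), w (2 * i + 1)) ∉ M) ∧
  (∀ i, 2 * i + 1 < 2 * k + 1 → s(w (2 * i + 1), w (2 * i + 2)) ∈ M)

/-- An `M`-augmenting path of length `2k+1`: an `M`-augmenting walk with pairwise
distinct vertices. -/
def IsAugPath {V : Type*} (G : SimpleGraph V) (M : Set (Sym2 V)) (k : ℕ) (w : ℕ → V) : Prop :=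
  IsAugWalk G M k w ∧
    ∀ i ≤ 2 * k + 1, ∀ j ≤ 2 * k + 1, w i = w j → i = j

/-- The set of edges of the path with vertex sequence `w 0, …, w (2k+1)`. -/
def PathEdges {V : Type*} (k : ℕ) (w : ℕ → V) : Set (Sym2 V) :=
  {e | ∃ i < 2 * k + 1, e = s(w i, w (i + 1))}

namespace HK
open Set
variable {V : Type*} {G : SimpleGraph V} {M A B N : Set (Sym2 V)}

lemma sym2_exists (z : Sym2 V) : ∃ x y, z = s(x, y) :=
  Sym2.ind (fun x y => ⟨x, y, rfl⟩) z

lemma matching_eq_of_mem (hM : IsMatching G M) {e f : Sym2 V} (he : e ∈ M) (hf : f ∈ M)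
    {v : V} (hv : v ∈ e) (hv' : v ∈ f) : e = f := by
  by_contra h
  exact hM.2 e he f hf h v hv hv'

lemma matching_ne (hM : IsMatching G M) {u v : V} (h : s(u, v) ∈ M) : u ≠ v := by
  intro h'
  subst h'
  exact G.irrefl ((SimpleGraph.mem_edgeSet G).mp (hM.1 h))

/-- The "path injectivity" condition. -/
def PInj (n : ℕ) (w : ℕ → V) : Prop := ∀ i ≤ n, ∀ j ≤ n, w i = w j → i = j

lemma edge_inj {k : ℕ} {w : ℕ → V} (hw : PInj (2 * k + 1) w) {i j : ℕ}
    (hi : i < 2 * k + 1) (hj : j < 2 * k + 1)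
    (h : s(w i, w (i + 1)) = s(w j, w (j + 1))) : i = j := by
  rw [Sym2.eq_iff] at h
  rcases h with ⟨h1, _⟩ | ⟨h1, h2⟩
  · exact hw i (by omega) j (by omega) h1
  · have := hw i (by omega) (j + 1) (by omega) h1
    have := hw (i + 1) (by omega) j (by omega) h2
    omega

lemma pathEdges_eq_image (k : ℕ) (w : ℕ → V) :
    PathEdges k w = (fun i => s(w i, w (i + 1))) '' (Set.Iio (2 * k + 1)) := by
  ext e
  simp [PathEdges, Set.mem_image, eq_comm]

lemma pathEdges_ncard {k : ℕ} {w : ℕ → V} (hw : PInj (2 * k + 1) w) :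
    (PathEdges k w).ncard = 2 * k + 1 := by
  rw [pathEdges_eq_image, Set.ncard_image_of_injOn, ← Finset.coe_Iio, Set.ncard_coe_finset]
  · simp
  · intro i hi j hj h
    exact edge_inj hw hi hj h

/-- even-indexed edge incident to any path vertex. -/
lemma incident_even {k : ℕ} {w : ℕ → V} {j : ℕ} (hj : j ≤ 2 * k + 1) :
    ∃ i < 2 * k + 1, Even i ∧ w j ∈ s(w i, w (i + 1)) := by
  rcases Nat.even_or_odd j with he | ho
  · have hj2 : j % 2 = 0 := Nat.even_iff.mp he
    exact ⟨j, by omega, he, by simp⟩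
  · have hj2 : j % 2 = 1 := Nat.odd_iff.mp ho
    refine ⟨j - 1, by omega, Nat.even_iff.mpr (by omega), ?_⟩
    rw [show j - 1 + 1 = j by omega]
    simp

/-- odd-indexed edge incident to any interior path vertex. -/
lemma incident_odd {k : ℕ} {w : ℕ → V} {j : ℕ} (hj0 : 0 < j) (hj : j ≤ 2 * k) :
    ∃ i < 2 * k + 1, ¬ Even i ∧ w j ∈ s(w i, w (i + 1)) := by
  rcases Nat.even_or_odd j with he | ho
  · have hj2 : j % 2 = 0 := Nat.even_iff.mp he
    refine ⟨j - 1, by omega, by rw [Nat.even_iff]; omega, ?_⟩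
    rw [show j - 1 + 1 = j by omega]
    simp
  · have hj2 : j % 2 = 1 := Nat.odd_iff.mp ho
    exact ⟨j, by omega, by rw [Nat.even_iff]; omega, by simp⟩


def PEv (k : ℕ) (w : ℕ → V) : Set (Sym2 V) :=
  {e | ∃ i < 2 * k + 1, Even i ∧ e = s(w i, w (i + 1))}

def POd (k : ℕ) (w : ℕ → V) : Set (Sym2 V) :=
  {e | ∃ i < 2 * k + 1, ¬ Even i ∧ e = s(w i, w (i + 1))}

lemma pathEdges_eq_union (k : ℕ) (w : ℕ → V) :
    PathEdges k w = PEv k w ∪ POd k w := by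
  ext e
  constructor
  · rintro ⟨i, hi, rfl⟩
    by_cases h : Even i
    · exact Or.inl ⟨i, hi, h, rfl⟩
    · exact Or.inr ⟨i, hi, h, rfl⟩
  · rintro (⟨i, hi, _, rfl⟩ | ⟨i, hi, _, rfl⟩) <;> exact ⟨i, hi, rfl⟩

lemma pev_subset (k : ℕ) (w : ℕ → V) : PEv k w ⊆ PathEdges k w := by
  rintro e ⟨i, hi, _, rfl⟩; exact ⟨i, hi, rfl⟩

lemma pod_subset (k : ℕ) (w : ℕ → V) : POd k w ⊆ PathEdges k w := by
  rintro e ⟨i, hi, _, rfl⟩; exact ⟨i, hi, rfl⟩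

lemma pev_ncard {k : ℕ} {w : ℕ → V} (hw : PInj (2 * k + 1) w) :
    (PEv k w).ncard = k + 1 := by
  have himg : PEv k w = (fun j => s(w (2 * j), w (2 * j + 1))) '' (Set.Iio (k + 1)) := by
    ext e
    constructor
    · rintro ⟨i, hi, he, rfl⟩
      have hi2 : i % 2 = 0 := Nat.even_iff.mp he
      refine ⟨i / 2, Set.mem_Iio.mpr (by omega), ?_⟩
      simp only
      rw [show 2 * (i / 2) = i by omega]
    · rintro ⟨j, hj, rfl⟩
      exact ⟨2 * j, by have := Set.mem_Iio.mp hj; omega, even_two_mul j, rfl⟩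
  rw [himg, Set.ncard_image_of_injOn, ← Finset.coe_Iio, Set.ncard_coe_finset, Nat.card_Iio]
  intro i hi j hj h
  have hi' := Set.mem_Iio.mp hi
  have hj' := Set.mem_Iio.mp hj
  have := edge_inj hw (i := 2 * i) (j := 2 * j) (by omega) (by omega) h
  omega

lemma pod_ncard {k : ℕ} {w : ℕ → V} (hw : PInj (2 * k + 1) w) :
    (POd k w).ncard = k := by
  have himg : POd k w = (fun j => s(w (2 * j + 1), w (2 * j + 1 + 1))) '' (Set.Iio k) := by
    ext e
    constructor
    · rintro ⟨i, hi, he, rfl⟩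
      have hi2 : i % 2 = 1 := Nat.odd_iff.mp (Nat.not_even_iff_odd.mp he)
      refine ⟨i / 2, Set.mem_Iio.mpr (by omega), ?_⟩
      simp only
      rw [show 2 * (i / 2) + 1 = i by omega]
    · rintro ⟨j, hj, rfl⟩
      refine ⟨2 * j + 1, by have := Set.mem_Iio.mp hj; omega, by rw [Nat.even_iff]; omega, rfl⟩
  rw [himg, Set.ncard_image_of_injOn, ← Finset.coe_Iio, Set.ncard_coe_finset, Nat.card_Iio]
  intro i hi j hj h
  have hi' := Set.mem_Iio.mp hi
  have hj' := Set.mem_Iio.mp hj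
  have := edge_inj hw (i := 2 * i + 1) (j := 2 * j + 1) (by omega) (by omega) h
  omega

section SD

variable {k : ℕ} {w : ℕ → V}

/-- Augmenting: `N ∆ P` is a matching when `P` is an `N`-augmenting-path edge set. -/
lemma sd_matching_aug (hN : IsMatching G N) (hw : PInj (2 * k + 1) w)
    (hedge : ∀ i < 2 * k + 1, s(w i, w (i + 1)) ∈ G.edgeSet)
    (hev : ∀ i < 2 * k + 1, Even i → s(w i, w (i + 1)) ∉ N)
    (hod : ∀ i < 2 * k + 1, ¬ Even i → s(w i, w (i + 1)) ∈ N)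
    (h0 : ¬ CoveredBy N (w 0)) (hend : ¬ CoveredBy N (w (2 * k + 1))) :
    IsMatching G (symmDiff N (PathEdges k w)) := by
  constructor
  · intro e he
    rw [Set.mem_symmDiff] at he
    rcases he with ⟨heN, _⟩ | ⟨⟨i, hi, rfl⟩, _⟩
    · exact hN.1 heN
    · exact hedge i hi
  · intro e he f hf hef v hve hvf
    rw [Set.mem_symmDiff] at he hf
    have mixed : ∀ e' f', e' ∈ N → e' ∉ PathEdges k w → f' ∈ PathEdges k w → f' ∉ N →
        v ∈ e' → v ∈ f' → False := by
      rintro e' f' he'N he'P ⟨i, hi, rfl⟩ hf'N hve' hvf'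
      have hiev : i % 2 = 0 := by
        rcases Nat.even_or_odd i with h | h
        · exact Nat.even_iff.mp h
        · have h2 := Nat.odd_iff.mp h
          exact absurd (hod i hi (by rw [Nat.even_iff]; omega)) hf'N
      rcases Sym2.mem_iff.mp hvf' with hv | hv
      · -- v = w i, i even, i < 2k+1 so i ≤ 2k; i = 0 or interior
        rcases Nat.eq_zero_or_pos i with rfl | hpos
        · exact h0 ⟨e', he'N, hv ▸ hve'⟩
        · obtain ⟨i', hi', hodd', hmem⟩ := incident_odd (k := k) hpos (by omega)
          have hgN := hod i' hi' hodd'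
          have := matching_eq_of_mem hN he'N hgN (hv ▸ hve') hmem
          exact he'P (this ▸ ⟨i', hi', rfl⟩)
      · -- v = w (i+1), i even so i+1 odd, i+1 ≤ 2k+1; endpoint iff i+1 = 2k+1
        rcases eq_or_lt_of_le (show i + 1 ≤ 2 * k + 1 by omega) with heq | hlt
        · exact hend ⟨e', he'N, by rw [← heq, ← hv]; exact hve'⟩
        · obtain ⟨i', hi', hodd', hmem⟩ := incident_odd (k := k) (show 0 < i + 1 by omega)
            (show i + 1 ≤ 2 * k by omega)
          have hgN := hod i' hi' hodd'
          have := matching_eq_of_mem hN he'N hgN (hv ▸ hve') hmem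
          exact he'P (this ▸ ⟨i', hi', rfl⟩)
    rcases he with ⟨heN, heP⟩ | ⟨heP, heN⟩
    · rcases hf with ⟨hfN, hfP⟩ | ⟨hfP, hfN⟩
      · exact hN.2 e heN f hfN hef v hve hvf
      · exact mixed e f heN heP hfP hfN hve hvf
    · rcases hf with ⟨hfN, hfP⟩ | ⟨hfP, hfN⟩
      · exact mixed f e hfN hfP heP heN hvf hve
      · -- both path edges, both even
        obtain ⟨i, hi, rfl⟩ := heP
        obtain ⟨j, hj, rfl⟩ := hfP
        have hiev : i % 2 = 0 := by
          rcases Nat.even_or_odd i with h | h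
          · exact Nat.even_iff.mp h
          · have h2 := Nat.odd_iff.mp h
            exact absurd (hod i hi (by rw [Nat.even_iff]; omega)) heN
        have hjev : j % 2 = 0 := by
          rcases Nat.even_or_odd j with h | h
          · exact Nat.even_iff.mp h
          · have h2 := Nat.odd_iff.mp h
            exact absurd (hod j hj (by rw [Nat.even_iff]; omega)) hfN
        have hij : i = j := by
          rcases Sym2.mem_iff.mp hve with ha | ha <;>
            rcases Sym2.mem_iff.mp hvf with hb | hb
          · have := hw i (by omega) j (by omega) (ha ▸ hb ▸ rfl)
            omega
          · have := hw i (by omega) (j + 1) (by omega) (ha ▸ hb ▸ rfl)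
            omega
          · have := hw (i + 1) (by omega) j (by omega) (ha ▸ hb ▸ rfl)
            omega
          · have := hw (i + 1) (by omega) (j + 1) (by omega) (ha ▸ hb ▸ rfl)
            omega
        subst hij
        exact hef rfl

/-- De-augmenting: `N ∆ P` is a matching when `P` alternates in/out of `N`
starting and ending with `N`-edges. -/
lemma sd_matching_deaug (hN : IsMatching G N) (hw : PInj (2 * k + 1) w)
    (hedge : ∀ i < 2 * k + 1, s(w i, w (i + 1)) ∈ G.edgeSet)
    (hev : ∀ i < 2 * k + 1, Even i → s(w i, w (i + 1)) ∈ N)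
    (hod : ∀ i < 2 * k + 1, ¬ Even i → s(w i, w (i + 1)) ∉ N) :
    IsMatching G (symmDiff N (PathEdges k w)) := by
  constructor
  · intro e he
    rw [Set.mem_symmDiff] at he
    rcases he with ⟨heN, _⟩ | ⟨⟨i, hi, rfl⟩, _⟩
    · exact hN.1 heN
    · exact hedge i hi
  · intro e he f hf hef v hve hvf
    rw [Set.mem_symmDiff] at he hf
    have mixed : ∀ e' f', e' ∈ N → e' ∉ PathEdges k w → f' ∈ PathEdges k w → f' ∉ N →
        v ∈ e' → v ∈ f' → False := by
      rintro e' f' he'N he'P ⟨i, hi, rfl⟩ hf'N hve' hvf'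
      have hiod : i % 2 = 1 := by
        rcases Nat.even_or_odd i with h | h
        · exact absurd (hev i hi h) hf'N
        · exact Nat.odd_iff.mp h
      have hjmem : ∃ j ≤ 2 * k + 1, v = w j := by
        rcases Sym2.mem_iff.mp hvf' with hv | hv
        · exact ⟨i, by omega, hv⟩
        · exact ⟨i + 1, by omega, hv⟩
      obtain ⟨j, hj, rfl⟩ := hjmem
      obtain ⟨i', hi', hev', hmem⟩ := incident_even (k := k) (w := w) hj
      have hgN := hev i' hi' hev'
      have := matching_eq_of_mem hN he'N hgN hve' hmem
      exact he'P (this ▸ ⟨i', hi', rfl⟩)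
    rcases he with ⟨heN, heP⟩ | ⟨heP, heN⟩
    · rcases hf with ⟨hfN, hfP⟩ | ⟨hfP, hfN⟩
      · exact hN.2 e heN f hfN hef v hve hvf
      · exact mixed e f heN heP hfP hfN hve hvf
    · rcases hf with ⟨hfN, hfP⟩ | ⟨hfP, hfN⟩
      · exact mixed f e hfN hfP heP heN hvf hve
      · obtain ⟨i, hi, rfl⟩ := heP
        obtain ⟨j, hj, rfl⟩ := hfP
        have hiod : i % 2 = 1 := by
          rcases Nat.even_or_odd i with h | h
          · exact absurd (hev i hi h) heN
          · exact Nat.odd_iff.mp h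
        have hjod : j % 2 = 1 := by
          rcases Nat.even_or_odd j with h | h
          · exact absurd (hev j hj h) hfN
          · exact Nat.odd_iff.mp h
        have hij : i = j := by
          rcases Sym2.mem_iff.mp hve with ha | ha <;>
            rcases Sym2.mem_iff.mp hvf with hb | hb
          · have := hw i (by omega) j (by omega) (ha ▸ hb ▸ rfl)
            omega
          · have := hw i (by omega) (j + 1) (by omega) (ha ▸ hb ▸ rfl)
            omega
          · have := hw (i + 1) (by omega) j (by omega) (ha ▸ hb ▸ rfl)
            omega
          · have := hw (i + 1) (by omega) (j + 1) (by omega) (ha ▸ hb ▸ rfl)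
            omega
        subst hij
        exact hef rfl

lemma inter_pathEdges_eq_pod (hev : ∀ i < 2 * k + 1, Even i → s(w i, w (i + 1)) ∉ N)
    (hod : ∀ i < 2 * k + 1, ¬ Even i → s(w i, w (i + 1)) ∈ N) :
    N ∩ PathEdges k w = POd k w := by
  ext e
  constructor
  · rintro ⟨heN, i, hi, rfl⟩
    rcases Nat.even_or_odd i with h | h
    · exact absurd heN (hev i hi h)
    · exact ⟨i, hi, by rw [Nat.even_iff]; have := Nat.odd_iff.mp h; omega, rfl⟩
  · rintro ⟨i, hi, ho, rfl⟩
    exact ⟨hod i hi ho, i, hi, rfl⟩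

lemma diff_pathEdges_eq_pev (hev : ∀ i < 2 * k + 1, Even i → s(w i, w (i + 1)) ∉ N)
    (hod : ∀ i < 2 * k + 1, ¬ Even i → s(w i, w (i + 1)) ∈ N) :
    PathEdges k w \ N = PEv k w := by
  ext e
  constructor
  · rintro ⟨⟨i, hi, rfl⟩, heN⟩
    rcases Nat.even_or_odd i with h | h
    · exact ⟨i, hi, h, rfl⟩
    · have := Nat.odd_iff.mp h
      exact absurd (hod i hi (by rw [Nat.even_iff]; omega)) heN
  · rintro ⟨i, hi, h, rfl⟩
    exact ⟨⟨i, hi, rfl⟩, hev i hi h⟩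

lemma inter_pathEdges_eq_pev (hev : ∀ i < 2 * k + 1, Even i → s(w i, w (i + 1)) ∈ N)
    (hod : ∀ i < 2 * k + 1, ¬ Even i → s(w i, w (i + 1)) ∉ N) :
    N ∩ PathEdges k w = PEv k w := by
  ext e
  constructor
  · rintro ⟨heN, i, hi, rfl⟩
    rcases Nat.even_or_odd i with h | h
    · exact ⟨i, hi, h, rfl⟩
    · have := Nat.odd_iff.mp h
      exact absurd heN (hod i hi (by rw [Nat.even_iff]; omega))
  · rintro ⟨i, hi, h, rfl⟩
    exact ⟨hev i hi h, i, hi, rfl⟩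

lemma diff_pathEdges_eq_pod (hev : ∀ i < 2 * k + 1, Even i → s(w i, w (i + 1)) ∈ N)
    (hod : ∀ i < 2 * k + 1, ¬ Even i → s(w i, w (i + 1)) ∉ N) :
    PathEdges k w \ N = POd k w := by
  ext e
  constructor
  · rintro ⟨⟨i, hi, rfl⟩, heN⟩
    rcases Nat.even_or_odd i with h | h
    · exact absurd (hev i hi h) heN
    · have := Nat.odd_iff.mp h
      exact ⟨i, hi, by rw [Nat.even_iff]; omega, rfl⟩
  · rintro ⟨i, hi, h, rfl⟩
    exact ⟨⟨i, hi, rfl⟩, hod i hi h⟩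

variable [Finite V]

lemma sd_ncard_split (N P : Set (Sym2 V)) :
    (symmDiff N P).ncard = (N \ P).ncard + (P \ N).ncard := by
  rw [Set.symmDiff_def]
  refine Set.ncard_union_eq ?_ (Set.toFinite _) (Set.toFinite _)
  rw [Set.disjoint_left]
  rintro x ⟨_, hx⟩ ⟨hx', _⟩
  exact hx hx'

lemma sd_ncard_aug (hw : PInj (2 * k + 1) w)
    (hev : ∀ i < 2 * k + 1, Even i → s(w i, w (i + 1)) ∉ N)
    (hod : ∀ i < 2 * k + 1, ¬ Even i → s(w i, w (i + 1)) ∈ N) :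
    (symmDiff N (PathEdges k w)).ncard = N.ncard + 1 := by
  have h1 := sd_ncard_split N (PathEdges k w)
  have h2 := Set.ncard_inter_add_ncard_diff_eq_ncard N (PathEdges k w) (Set.toFinite _)
  rw [inter_pathEdges_eq_pod hev hod, pod_ncard hw] at h2
  rw [diff_pathEdges_eq_pev hev hod, pev_ncard hw] at h1
  omega

lemma sd_ncard_deaug (hw : PInj (2 * k + 1) w)
    (hev : ∀ i < 2 * k + 1, Even i → s(w i, w (i + 1)) ∈ N)
    (hod : ∀ i < 2 * k + 1, ¬ Even i → s(w i, w (i + 1)) ∉ N) :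
    (symmDiff N (PathEdges k w)).ncard + 1 = N.ncard := by
  have h1 := sd_ncard_split N (PathEdges k w)
  have h2 := Set.ncard_inter_add_ncard_diff_eq_ncard N (PathEdges k w) (Set.toFinite _)
  rw [inter_pathEdges_eq_pev hev hod, pev_ncard hw] at h2
  rw [diff_pathEdges_eq_pod hev hod, pod_ncard hw] at h1
  omega

end SD

section Transfer

variable {k : ℕ} {w : ℕ → V}

lemma sd_covers (hev : ∀ i < 2 * k + 1, Even i → s(w i, w (i + 1)) ∉ N)
    {j : ℕ} (hj : j ≤ 2 * k + 1) :
    ∃ e, e ∈ symmDiff N (PathEdges k w) ∧ e ∈ PathEdges k w ∧ w j ∈ e := by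
  obtain ⟨i, hi, hevi, hmem⟩ := incident_even (k := k) (w := w) hj
  exact ⟨s(w i, w (i + 1)), Set.mem_symmDiff.mpr (Or.inr ⟨⟨i, hi, rfl⟩, hev i hi hevi⟩),
    ⟨i, hi, rfl⟩, hmem⟩

lemma mem_sd_of_not_pathEdges {e : Sym2 V} (he : e ∉ PathEdges k w) :
    e ∈ symmDiff N (PathEdges k w) ↔ e ∈ N := by
  rw [Set.mem_symmDiff]
  tauto

lemma not_mem_pathEdge_of_off {v : V} (hv : ∀ i ≤ 2 * k + 1, v ≠ w i)
    {e : Sym2 V} (he : e ∈ PathEdges k w) : v ∉ e := by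
  obtain ⟨i, hi, rfl⟩ := he
  intro hmem
  rcases Sym2.mem_iff.mp hmem with h | h
  · exact hv i (by omega) h
  · exact hv (i + 1) (by omega) h

lemma covered_sd_of_off {v : V} (hv : ∀ i ≤ 2 * k + 1, v ≠ w i) :
    CoveredBy (symmDiff N (PathEdges k w)) v ↔ CoveredBy N v := by
  constructor
  · rintro ⟨e, he, hve⟩
    rw [Set.mem_symmDiff] at he
    rcases he with ⟨heN, _⟩ | ⟨heP, _⟩
    · exact ⟨e, heN, hve⟩
    · exact absurd hve (not_mem_pathEdge_of_off hv heP)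
  · rintro ⟨e, he, hve⟩
    have heP : e ∉ PathEdges k w := fun hP => not_mem_pathEdge_of_off hv hP hve
    exact ⟨e, Set.mem_symmDiff.mpr (Or.inl ⟨he, heP⟩), hve⟩

end Transfer

section AugConvert

variable {k : ℕ} {w : ℕ → V}

lemma aug_even_edges (h : IsAugWalk G N k w) :
    ∀ i < 2 * k + 1, Even i → s(w i, w (i + 1)) ∉ N := by
  intro i hi he
  have hi2 : i % 2 = 0 := Nat.even_iff.mp he
  have := h.2.2.2.1 (i / 2) (by omega)
  rwa [show 2 * (i / 2) = i by omega, show i + 1 = i + 1 from rfl] at this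

lemma aug_odd_edges (h : IsAugWalk G N k w) :
    ∀ i < 2 * k + 1, ¬ Even i → s(w i, w (i + 1)) ∈ N := by
  intro i hi ho
  have hi2 : i % 2 = 1 := by rw [Nat.even_iff] at ho; omega
  have := h.2.2.2.2 (i / 2) (by omega)
  rwa [show 2 * (i / 2) + 1 = i by omega, show 2 * (i / 2) + 2 = i + 1 by omega] at this

lemma aug_edges_mem (h : IsAugWalk G N k w) :
    ∀ i < 2 * k + 1, s(w i, w (i + 1)) ∈ G.edgeSet := fun i hi =>
  (SimpleGraph.mem_edgeSet G).mpr (h.1 i hi)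

/-- Augmenting along an augmenting path gives a matching. -/
lemma augPath_matching (hN : IsMatching G N) (h : IsAugPath G N k w) :
    IsMatching G (symmDiff N (PathEdges k w)) :=
  sd_matching_aug hN h.2 (aug_edges_mem h.1) (aug_even_edges h.1) (aug_odd_edges h.1)
    h.1.2.1 h.1.2.2.1

lemma augPath_ncard [Finite V] (h : IsAugPath G N k w) :
    (symmDiff N (PathEdges k w)).ncard = N.ncard + 1 :=
  sd_ncard_aug h.2 (aug_even_edges h.1) (aug_odd_edges h.1)

lemma augPath_covers (h : IsAugPath G N k w) {j : ℕ} (hj : j ≤ 2 * k + 1) :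
    ∃ e, e ∈ symmDiff N (PathEdges k w) ∧ e ∈ PathEdges k w ∧ w j ∈ e :=
  sd_covers (aug_even_edges h.1) hj

end AugConvert

section Walk

/-- An alternating walk for matchings `A`,`B`: starts at an `A`-free vertex,
distinct vertices, edges alternately in `B \ A` (even positions) and `A \ B` (odd). -/
def AltWalk (A B : Set (Sym2 V)) (n : ℕ) (w : ℕ → V) : Prop :=
  ¬ CoveredBy A (w 0) ∧ PInj n w ∧
  ∀ i < n, (Even i → s(w i, w (i + 1)) ∈ B \ A) ∧ (¬ Even i → s(w i, w (i + 1)) ∈ A \ B)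

lemma alt_extend_even (hA : IsMatching G A) (hB : IsMatching G B)
    {n : ℕ} {w : ℕ → V} (hw : AltWalk A B n w) (hn : n % 2 = 0)
    (hc : CoveredBy B (w n)) :
    ∃ w', AltWalk A B (n + 1) w' ∧ ∀ i ≤ n, w' i = w i := by
  classical
  obtain ⟨hfree, hinj, halt⟩ := hw
  obtain ⟨e, heB, hve⟩ := hc
  obtain ⟨u, rfl⟩ : ∃ u, e = s(w n, u) := Sym2.mem_iff_exists.mp hve
  have hnu : w n ≠ u := matching_ne hB heB
  have heA : s(w n, u) ∉ A := by
    intro hA'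
    rcases Nat.eq_zero_or_pos n with rfl | hpos
    · exact hfree ⟨s(w 0, u), hA', Sym2.mem_mk_left _ _⟩
    · have hlast := (halt (n - 1) (by omega)).2 (by rw [Nat.even_iff]; omega)
      rw [show n - 1 + 1 = n by omega] at hlast
      have hEq : s(w n, u) = s(w (n - 1), w n) :=
        matching_eq_of_mem hA hA' hlast.1 (Sym2.mem_mk_left _ _) (Sym2.mem_mk_right _ _)
      rw [hEq] at heB
      exact hlast.2 heB
  have hfresh : ∀ j ≤ n, u ≠ w j := by
    intro j hj hju
    have hwnj : w n ≠ w j := fun h => hnu (h ▸ hju.symm ▸ rfl)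
    have hjn : j ≠ n := fun h => hwnj (by rw [h])
    have hvj : w j ∈ s(w n, u) := by rw [hju] at hve ⊢; exact Sym2.mem_mk_right _ _
    rcases Nat.even_or_odd j with hje | hjo
    · have hj2 : j % 2 = 0 := Nat.even_iff.mp hje
      have hg := (halt j (by omega)).1 hje
      have hEq : s(w n, u) = s(w j, w (j + 1)) :=
        matching_eq_of_mem hB heB hg.1 hvj (Sym2.mem_mk_left _ _)
      rcases Sym2.eq_iff.mp hEq with ⟨h1, _⟩ | ⟨h1, _⟩
      · exact hwnj h1
      · have := hinj n le_rfl (j + 1) (by omega) h1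
        omega
    · have hj2 : j % 2 = 1 := Nat.odd_iff.mp hjo
      have hg := (halt (j - 1) (by omega)).1 (Nat.even_iff.mpr (by omega))
      rw [show j - 1 + 1 = j by omega] at hg
      have hEq : s(w n, u) = s(w (j - 1), w j) :=
        matching_eq_of_mem hB heB hg.1 hvj (Sym2.mem_mk_right _ _)
      rcases Sym2.eq_iff.mp hEq with ⟨h1, _⟩ | ⟨h1, _⟩
      · have := hinj n le_rfl (j - 1) (by omega) h1
        omega
      · exact hwnj h1
  refine ⟨Function.update w (n + 1) u, ⟨?_, ?_, ?_⟩, fun i hi => Function.update_of_ne (by omega) _ _⟩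
  · rw [Function.update_of_ne (by omega)]
    exact hfree
  · intro i hi j hj heq
    by_cases hi' : i = n + 1 <;> by_cases hj' : j = n + 1
    · omega
    · rw [hi', Function.update_self, Function.update_of_ne (by omega)] at heq
      exact absurd heq (hfresh j (by omega))
    · rw [hj', Function.update_self, Function.update_of_ne (by omega)] at heq
      exact absurd heq ((hfresh i (by omega)).symm)
    · rw [Function.update_of_ne (by omega), Function.update_of_ne (by omega)] at heq
      exact hinj i (by omega) j (by omega) heq
  · intro i hi
    rcases Nat.lt_or_ge i n with hlt | hge
    · rw [Function.update_of_ne (by omega : i ≠ n + 1), Function.update_of_ne (by omega : i + 1 ≠ n + 1)]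
      exact halt i hlt
    · have hieq : i = n := by omega
      subst hieq
      rw [Function.update_of_ne (by omega : i ≠ i + 1), Function.update_self]
      constructor
      · intro _
        exact ⟨heB, heA⟩
      · intro h
        exact absurd (Nat.even_iff.mpr hn) h

lemma alt_extend_odd (hA : IsMatching G A) (hB : IsMatching G B)
    {n : ℕ} {w : ℕ → V} (hw : AltWalk A B n w) (hn : n % 2 = 1)
    (hc : CoveredBy A (w n)) :
    ∃ w', AltWalk A B (n + 1) w' ∧ ∀ i ≤ n, w' i = w i := by
  classical
  obtain ⟨hfree, hinj, halt⟩ := hw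
  obtain ⟨e, heA, hve⟩ := hc
  obtain ⟨u, rfl⟩ : ∃ u, e = s(w n, u) := Sym2.mem_iff_exists.mp hve
  have hnu : w n ≠ u := matching_ne hA heA
  have heB : s(w n, u) ∉ B := by
    intro hB'
    have hlast := (halt (n - 1) (by omega)).1 (Nat.even_iff.mpr (by omega))
    rw [show n - 1 + 1 = n by omega] at hlast
    have hEq : s(w n, u) = s(w (n - 1), w n) :=
      matching_eq_of_mem hB hB' hlast.1 (Sym2.mem_mk_left _ _) (Sym2.mem_mk_right _ _)
    rw [hEq] at heA
    exact hlast.2 heA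
  have hfresh : ∀ j ≤ n, u ≠ w j := by
    intro j hj hju
    have hwnj : w n ≠ w j := fun h => hnu (h ▸ hju.symm ▸ rfl)
    have hjn : j ≠ n := fun h => hwnj (by rw [h])
    have hvj : w j ∈ s(w n, u) := by rw [hju] at hve ⊢; exact Sym2.mem_mk_right _ _
    rcases Nat.eq_zero_or_pos j with rfl | hjpos
    · exact hfree ⟨s(w n, u), heA, hvj⟩
    rcases Nat.even_or_odd j with hje | hjo
    · have hj2 : j % 2 = 0 := Nat.even_iff.mp hje
      have hg := (halt (j - 1) (by omega)).2 (by rw [Nat.even_iff]; omega)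
      rw [show j - 1 + 1 = j by omega] at hg
      have hEq : s(w n, u) = s(w (j - 1), w j) :=
        matching_eq_of_mem hA heA hg.1 hvj (Sym2.mem_mk_right _ _)
      rcases Sym2.eq_iff.mp hEq with ⟨h1, _⟩ | ⟨h1, _⟩
      · have := hinj n le_rfl (j - 1) (by omega) h1
        omega
      · exact hwnj h1
    · have hj2 : j % 2 = 1 := Nat.odd_iff.mp hjo
      have hg := (halt j (by omega)).2 (by rw [Nat.even_iff]; omega)
      have hEq : s(w n, u) = s(w j, w (j + 1)) :=
        matching_eq_of_mem hA heA hg.1 hvj (Sym2.mem_mk_left _ _)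
      rcases Sym2.eq_iff.mp hEq with ⟨h1, _⟩ | ⟨h1, _⟩
      · exact hwnj h1
      · have := hinj n le_rfl (j + 1) (by omega) h1
        omega
  refine ⟨Function.update w (n + 1) u, ⟨?_, ?_, ?_⟩, fun i hi => Function.update_of_ne (by omega) _ _⟩
  · rw [Function.update_of_ne (by omega)]
    exact hfree
  · intro i hi j hj heq
    by_cases hi' : i = n + 1 <;> by_cases hj' : j = n + 1
    · omega
    · rw [hi', Function.update_self, Function.update_of_ne (by omega)] at heq
      exact absurd heq (hfresh j (by omega))
    · rw [hj', Function.update_self, Function.update_of_ne (by omega)] at heq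
      exact absurd heq ((hfresh i (by omega)).symm)
    · rw [Function.update_of_ne (by omega), Function.update_of_ne (by omega)] at heq
      exact hinj i (by omega) j (by omega) heq
  · intro i hi
    rcases Nat.lt_or_ge i n with hlt | hge
    · rw [Function.update_of_ne (by omega : i ≠ n + 1), Function.update_of_ne (by omega : i + 1 ≠ n + 1)]
      exact halt i hlt
    · have hieq : i = n := by omega
      subst hieq
      rw [Function.update_of_ne (by omega : i ≠ i + 1), Function.update_self]
      constructor
      · intro h
        rw [Nat.even_iff] at h
        omega
      · intro _
        exact ⟨heA, heB⟩


lemma walk_bound [Fintype V] {n : ℕ} {w : ℕ → V} (hw : AltWalk A B n w) :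
    n < Fintype.card V := by
  have hinj : Function.Injective (fun i : Fin (n + 1) => w i) := by
    intro i j h
    exact Fin.ext (hw.2.1 i (by omega) j (by omega) h)
  have := Fintype.card_le_of_injective _ hinj
  simpa using this

lemma exists_max_walk [Fintype V] {v0 : V} (hv0A : ¬ CoveredBy A v0) :
    ∃ n w, AltWalk A B n w ∧ w 0 = v0 ∧
      ∀ n' w', AltWalk A B n' w' → w' 0 = v0 → n' ≤ n := by
  classical
  set Q : ℕ → Prop := fun n => ∃ w, AltWalk A B n w ∧ w 0 = v0 with hQ
  have hQ0 : Q 0 := by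
    refine ⟨fun _ => v0, ⟨hv0A, ?_, ?_⟩, rfl⟩
    · intro i hi j hj _
      omega
    · intro i hi
      omega
  have hspec : Q (Nat.findGreatest Q (Fintype.card V)) :=
    Nat.findGreatest_spec (Nat.zero_le _) hQ0
  obtain ⟨w, hw, hw0⟩ := hspec
  refine ⟨_, w, hw, hw0, ?_⟩
  intro n' w' hw' hw'0
  by_contra hgt
  exact Nat.findGreatest_is_greatest (P := Q) (n := Fintype.card V) (k := n')
    (by omega) (le_of_lt (walk_bound hw')) ⟨w', hw', hw'0⟩

/-- Reverse determinism: two even alternating walks with the same endpoint have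
the same starting vertex. -/
lemma walk_rev_aux (hA : IsMatching G A) (hB : IsMatching G B)
    {n n' : ℕ} {w w' : ℕ → V} (hw : AltWalk A B n w) (hw' : AltWalk A B n' w')
    (hle : n ≤ n') (hn : n % 2 = 0) (hn' : n' % 2 = 0) (hend : w n = w' n') :
    w 0 = w' 0 := by
  obtain ⟨hfree, hinj, halt⟩ := hw
  obtain ⟨hfree', hinj', halt'⟩ := hw'
  have claim : ∀ i, i ≤ n → w (n - i) = w' (n' - i) := by
    intro i
    induction i with
    | zero => intro _; simpa using hend
    | succ i ih =>
      intro hi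
      have hprev : w (n - i) = w' (n' - i) := ih (by omega)
      have ha : n - i - 1 < n := by omega
      have ha' : n' - i - 1 < n' := by omega
      have hyw : w (n - i - 1 + 1) = w (n - i) := by rw [show n - i - 1 + 1 = n - i by omega]
      have hyw' : w' (n' - i - 1 + 1) = w' (n' - i) := by rw [show n' - i - 1 + 1 = n' - i by omega]
      have goal_eq : n - (i + 1) = n - i - 1 := by omega
      have goal_eq' : n' - (i + 1) = n' - i - 1 := by omega
      rw [goal_eq, goal_eq']
      rcases Nat.even_or_odd (n - i - 1) with hpar | hpar
      · have hpar2 : (n - i - 1) % 2 = 0 := Nat.even_iff.mp hpar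
        have hpar' : (n' - i - 1) % 2 = 0 := by omega
        have he := (halt (n - i - 1) ha).1 hpar
        have he' := (halt' (n' - i - 1) ha').1 (Nat.even_iff.mpr hpar')
        have hEq : s(w (n - i - 1), w (n - i - 1 + 1)) = s(w' (n' - i - 1), w' (n' - i - 1 + 1)) := by
          refine matching_eq_of_mem hB he.1 he'.1 (v := w' (n' - i)) ?_ ?_
          · rw [hyw, hprev]
            exact Sym2.mem_mk_right _ _
          · rw [hyw']
            exact Sym2.mem_mk_right _ _
        rcases Sym2.eq_iff.mp hEq with ⟨h1, _⟩ | ⟨h1, h2⟩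
        · exact h1
        · rw [hyw'] at h1
          rw [← hprev] at h1
          have := hinj (n - i - 1) (by omega) (n - i) (by omega) h1
          omega
      · have hpar2 : (n - i - 1) % 2 = 1 := Nat.odd_iff.mp hpar
        have hpar' : ¬ Even (n' - i - 1) := by rw [Nat.even_iff]; omega
        have he := (halt (n - i - 1) ha).2 (by rw [Nat.even_iff]; omega)
        have he' := (halt' (n' - i - 1) ha').2 hpar'
        have hEq : s(w (n - i - 1), w (n - i - 1 + 1)) = s(w' (n' - i - 1), w' (n' - i - 1 + 1)) := by
          refine matching_eq_of_mem hA he.1 he'.1 (v := w' (n' - i)) ?_ ?_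
          · rw [hyw, hprev]
            exact Sym2.mem_mk_right _ _
          · rw [hyw']
            exact Sym2.mem_mk_right _ _
        rcases Sym2.eq_iff.mp hEq with ⟨h1, _⟩ | ⟨h1, h2⟩
        · exact h1
        · rw [hyw'] at h1
          rw [← hprev] at h1
          have := hinj (n - i - 1) (by omega) (n - i) (by omega) h1
          omega
  have h0 : w 0 = w' (n' - n) := by
    have := claim n le_rfl
    simpa using this
  rcases Nat.eq_or_lt_of_le hle with heq | hlt
  · rw [h0, heq]
    simp
  · exfalso
    have hd : n' - n - 1 < n' := by omega
    have he' := (halt' (n' - n - 1) hd).2 (by rw [Nat.even_iff]; omega)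
    refine hfree ⟨_, he'.1, ?_⟩
    rw [h0, show n' - n = n' - n - 1 + 1 by omega]
    exact Sym2.mem_mk_right _ _

lemma walk_rev (hA : IsMatching G A) (hB : IsMatching G B)
    {n n' : ℕ} {w w' : ℕ → V} (hw : AltWalk A B n w) (hw' : AltWalk A B n' w')
    (hn : n % 2 = 0) (hn' : n' % 2 = 0) (hend : w n = w' n') :
    w 0 = w' 0 := by
  rcases le_total n n' with h | h
  · exact walk_rev_aux hA hB hw hw' h hn hn' hend
  · exact (walk_rev_aux hA hB hw' hw h hn' hn hend.symm).symm

lemma covered_ncard [Finite V] (hM : IsMatching G M) :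
    {v | CoveredBy M v}.ncard = 2 * M.ncard := by
  classical
  have main : ∀ S : Set (Sym2 V), S.Finite → S ⊆ M →
      {v | CoveredBy S v}.ncard = 2 * S.ncard := by
    intro S hS
    refine Set.Finite.induction_on (motive := fun S _ => S ⊆ M → {v | CoveredBy S v}.ncard = 2 * S.ncard) S hS ?_ ?_
    · intro _
      have : {v : V | CoveredBy (∅ : Set (Sym2 V)) v} = ∅ := by
        ext v
        simp [CoveredBy]
      rw [this]
      simp
    · rintro a s ha hs ih hsub
      have hsubM : s ⊆ M := fun x hx => hsub (Set.mem_insert_of_mem _ hx)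
      have haM : a ∈ M := hsub (Set.mem_insert _ _)
      obtain ⟨x, y, rfl⟩ := sym2_exists a
      have hxy : x ≠ y := matching_ne hM haM
      have hset : {v | CoveredBy (insert s(x, y) s) v} =
          ({x, y} : Set V) ∪ {v | CoveredBy s v} := by
        ext v
        simp only [Set.mem_setOf_eq, CoveredBy, Set.mem_insert_iff, Set.mem_union]
        constructor
        · rintro ⟨e, (rfl | he), hv⟩
          · rcases Sym2.mem_iff.mp hv with h | h
            · exact Or.inl (Or.inl h)
            · exact Or.inl (Or.inr h)
          · exact Or.inr ⟨e, he, hv⟩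
        · rintro ((rfl | rfl) | ⟨e, he, hv⟩)
          · exact ⟨s(v, y), Or.inl rfl, Sym2.mem_mk_left _ _⟩
          · exact ⟨s(x, v), Or.inl rfl, Sym2.mem_mk_right _ _⟩
          · exact ⟨e, Or.inr he, hv⟩
      have hdisj : Disjoint ({x, y} : Set V) {v | CoveredBy s v} := by
        rw [Set.disjoint_left]
        rintro v hv ⟨e, he, hve⟩
        have hne : e ≠ s(x, y) := fun h => ha (h ▸ he)
        have hvxy : v ∈ s(x, y) := by
          rcases hv with rfl | rfl
          · exact Sym2.mem_mk_left _ _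
          · exact Sym2.mem_mk_right _ _
        exact hM.2 e (hsubM he) s(x, y) haM hne v hve hvxy
      rw [hset, Set.ncard_union_eq hdisj (Set.toFinite _) (Set.toFinite _),
        Set.ncard_pair hxy, ih hsubM, Set.ncard_insert_of_notMem ha (Set.toFinite _)]
      ring
  exact main M (Set.toFinite _) le_rfl


lemma half_step [Fintype V] (hA : IsMatching G A) (hB : IsMatching G B)
    (hno : ¬ ∃ t, ∃ w : ℕ → V, IsAugPath G A t w ∧
      ∀ i < 2 * t + 1, (Even i → s(w i, w (i + 1)) ∈ B \ A) ∧
        (¬ Even i → s(w i, w (i + 1)) ∈ A \ B))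
    {v0 : V} (hB0 : CoveredBy B v0) (hA0 : ¬ CoveredBy A v0) :
    ∃ n w, AltWalk A B n w ∧ w 0 = v0 ∧ n % 2 = 0 ∧
      CoveredBy A (w n) ∧ ¬ CoveredBy B (w n) := by
  obtain ⟨n, w, hw, hw0, hmax⟩ := exists_max_walk (B := B) hA0
  rcases Nat.even_or_odd n with hev | hod
  · have hn2 := Nat.even_iff.mp hev
    have hnB : ¬ CoveredBy B (w n) := by
      intro hc
      obtain ⟨w', hw', hagree⟩ := alt_extend_even hA hB hw hn2 hc
      have := hmax (n + 1) w' hw' (by rw [hagree 0 (by omega)]; exact hw0)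
      omega
    have hn0 : n ≠ 0 := by
      rintro rfl
      exact hnB (hw0 ▸ hB0)
    have hcA : CoveredBy A (w n) := by
      have he := (hw.2.2 (n - 1) (by omega)).2 (by rw [Nat.even_iff]; omega)
      refine ⟨_, he.1, ?_⟩
      rw [show n = n - 1 + 1 by omega]
      exact Sym2.mem_mk_right _ _
    exact ⟨n, w, hw, hw0, hn2, hcA, hnB⟩
  · exfalso
    have hn2 := Nat.odd_iff.mp hod
    have hnA : ¬ CoveredBy A (w n) := by
      intro hc
      obtain ⟨w', hw', hagree⟩ := alt_extend_odd hA hB hw hn2 hc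
      have := hmax (n + 1) w' hw' (by rw [hagree 0 (by omega)]; exact hw0)
      omega
    have hnt : n = 2 * (n / 2) + 1 := by omega
    refine hno ⟨n / 2, w, ⟨⟨?_, ?_, ?_, ?_, ?_⟩, ?_⟩, ?_⟩
    · intro i hi
      have hi' : i < n := by omega
      rcases Nat.even_or_odd i with h | h
      · exact (SimpleGraph.mem_edgeSet G).mp (hB.1 ((hw.2.2 i hi').1 h).1)
      · have h2 := Nat.odd_iff.mp h
        exact (SimpleGraph.mem_edgeSet G).mp
          (hA.1 ((hw.2.2 i hi').2 (by rw [Nat.even_iff]; omega)).1)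
    · exact hw.1
    · rw [show 2 * (n / 2) + 1 = n by omega]
      exact hnA
    · intro i hi
      exact ((hw.2.2 (2 * i) (by omega)).1 (even_two_mul i)).2
    · intro i hi
      have h := (hw.2.2 (2 * i + 1) (by omega)).2 (by rw [Nat.even_iff]; omega)
      rw [show 2 * i + 1 + 1 = 2 * i + 2 by omega] at h
      exact h.1
    · intro i hi j hj
      exact hw.2.1 i (by omega) j (by omega)
    · intro i hi
      exact hw.2.2 i (by omega)

/-- Berge-type existence: if `|A| < |B|` there is an `A`-augmenting path whose
edges alternate in `B \ A` and `A \ B`. -/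
lemma berge [Fintype V] (hA : IsMatching G A) (hB : IsMatching G B)
    (hcard : A.ncard < B.ncard) :
    ∃ t, ∃ w : ℕ → V, IsAugPath G A t w ∧
      ∀ i < 2 * t + 1, (Even i → s(w i, w (i + 1)) ∈ B \ A) ∧
        (¬ Even i → s(w i, w (i + 1)) ∈ A \ B) := by
  classical
  by_contra hno
  set F := {v | CoveredBy B v ∧ ¬ CoveredBy A v} with hF
  set F' := {v | CoveredBy A v ∧ ¬ CoveredBy B v} with hF'
  have hstep : ∀ v0 ∈ F, ∃ n w, AltWalk A B n w ∧ w 0 = v0 ∧ n % 2 = 0 ∧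
      CoveredBy A (w n) ∧ ¬ CoveredBy B (w n) :=
    fun v0 h => half_step hA hB hno h.1 h.2
  let f : V → V := fun v0 => if h : v0 ∈ F then
      (hstep v0 h).choose_spec.choose (hstep v0 h).choose
    else v0
  have hf : ∀ v0, ∀ h : v0 ∈ F, ∃ n w, AltWalk A B n w ∧ w 0 = v0 ∧ n % 2 = 0 ∧
      CoveredBy A (f v0) ∧ ¬ CoveredBy B (f v0) ∧ w n = f v0 := by
    intro v0 h
    have hspec := (hstep v0 h).choose_spec.choose_spec
    have hfv : f v0 = (hstep v0 h).choose_spec.choose (hstep v0 h).choose := by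
      simp only [f, dif_pos h]
    exact ⟨(hstep v0 h).choose, (hstep v0 h).choose_spec.choose, hspec.1, hspec.2.1,
      hspec.2.2.1, by rw [hfv]; exact hspec.2.2.2.1, by rw [hfv]; exact hspec.2.2.2.2,
      hfv.symm⟩
  have hmaps : ∀ v0 ∈ F, f v0 ∈ F' := by
    intro v0 h
    obtain ⟨n, w, _, _, _, h1, h2, _⟩ := hf v0 h
    exact ⟨h1, h2⟩
  have hinjF : Set.InjOn f F := by
    intro a ha b hb hfe
    obtain ⟨n, wa, hwa, ha0, hne, _, _, hena⟩ := hf a ha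
    obtain ⟨n', wb, hwb, hb0, hne', _, _, henb⟩ := hf b hb
    have h := walk_rev hA hB hwa hwb hne hne' (by rw [hena, henb, hfe])
    rw [ha0, hb0] at h
    exact h
  have hcard1 : F.ncard ≤ F'.ncard :=
    Set.ncard_le_ncard_of_injOn f hmaps hinjF (Set.toFinite _)
  have hCB := covered_ncard hB
  have hCA := covered_ncard hA
  have e1 := Set.ncard_inter_add_ncard_diff_eq_ncard {v | CoveredBy B v}
    {v | CoveredBy A v} (Set.toFinite _)
  have e2 := Set.ncard_inter_add_ncard_diff_eq_ncard {v | CoveredBy A v}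
    {v | CoveredBy B v} (Set.toFinite _)
  have hFd : F = {v | CoveredBy B v} \ {v | CoveredBy A v} := by
    ext v
    simp [hF, Set.mem_diff]
  have hF'd : F' = {v | CoveredBy A v} \ {v | CoveredBy B v} := by
    ext v
    simp [hF', Set.mem_diff]
  rw [hFd, hF'd] at hcard1
  rw [Set.inter_comm] at e2
  omega



lemma key [Fintype V] (hA : IsMatching G A) {ℓ : ℕ}
    (hshort : ∀ k < ℓ, ∀ w : ℕ → V, ¬ IsAugPath G A k w) :
    ∀ d (B : Set (Sym2 V)), IsMatching G B → A.ncard + d ≤ B.ncard →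
      d * (2 * ℓ + 1) ≤ (symmDiff A B).ncard := by
  intro d
  induction d with
  | zero =>
    intro B _ _
    simp
  | succ d ih =>
    intro B hB hcard
    obtain ⟨t, w, haug, hpat⟩ := berge hA hB (by omega)
    have htl : ℓ ≤ t := by
      by_contra h
      exact hshort t (by omega) w haug
    have hPsub : PathEdges t w ⊆ symmDiff A B := by
      rintro e ⟨i, hi, rfl⟩
      rcases Nat.even_or_odd i with h | h
      · have h' := (hpat i hi).1 h
        exact Set.mem_symmDiff.mpr (Or.inr ⟨h'.1, h'.2⟩)
      · have h2 := Nat.odd_iff.mp h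
        have h' := (hpat i hi).2 (by rw [Nat.even_iff]; omega)
        exact Set.mem_symmDiff.mpr (Or.inl ⟨h'.1, h'.2⟩)
    have hevB : ∀ i < 2 * t + 1, Even i → s(w i, w (i + 1)) ∈ B :=
      fun i hi h => ((hpat i hi).1 h).1
    have hodB : ∀ i < 2 * t + 1, ¬ Even i → s(w i, w (i + 1)) ∉ B :=
      fun i hi h => ((hpat i hi).2 h).2
    have hB'm : IsMatching G (symmDiff B (PathEdges t w)) :=
      sd_matching_deaug hB haug.2 (aug_edges_mem haug.1) hevB hodB
    have hB'c : (symmDiff B (PathEdges t w)).ncard + 1 = B.ncard :=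
      sd_ncard_deaug haug.2 hevB hodB
    have hABeq : symmDiff A (symmDiff B (PathEdges t w)) = symmDiff A B \ PathEdges t w := by
      rw [← symmDiff_assoc]
      ext e
      rw [Set.mem_symmDiff, Set.mem_diff]
      constructor
      · rintro (⟨h1, h2⟩ | ⟨h1, h2⟩)
        · exact ⟨h1, h2⟩
        · exact absurd (hPsub h1) h2
      · rintro ⟨h1, h2⟩
        exact Or.inl ⟨h1, h2⟩
    have hih := ih (symmDiff B (PathEdges t w)) hB'm (by omega)
    rw [hABeq] at hih
    have hPn : (PathEdges t w).ncard = 2 * t + 1 := pathEdges_ncard haug.2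
    have hd := Set.ncard_diff hPsub (Set.toFinite _)
    have hPle : (PathEdges t w).ncard ≤ (symmDiff A B).ncard :=
      Set.ncard_le_ncard hPsub (Set.toFinite _)
    have hexp : (d + 1) * (2 * ℓ + 1) = d * (2 * ℓ + 1) + (2 * ℓ + 1) := by ring
    omega


/-- Augmenting along the first `j` paths of a disjoint family. -/
lemma fam [Fintype V] (ℓ : ℕ) (hM : IsMatching G M)
    (m : ℕ) (P : ℕ → ℕ → V)
    (hP : ∀ i < m, IsAugPath G M ℓ (P i))
    (hdisj : ∀ i < m, ∀ j < m, i ≠ j →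
      ∀ a ≤ 2 * ℓ + 1, ∀ b ≤ 2 * ℓ + 1, P i a ≠ P j b) :
    ∀ j ≤ m,
      IsMatching G (symmDiff M {e | ∃ i < j, e ∈ PathEdges ℓ (P i)}) ∧
      (symmDiff M {e | ∃ i < j, e ∈ PathEdges ℓ (P i)}).ncard = M.ncard + j ∧
      {e | ∃ i < j, e ∈ PathEdges ℓ (P i)}.ncard = j * (2 * ℓ + 1) ∧
      (∀ e, e ∉ {e | ∃ i < j, e ∈ PathEdges ℓ (P i)} →
        (e ∈ symmDiff M {e | ∃ i < j, e ∈ PathEdges ℓ (P i)} ↔ e ∈ M)) ∧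
      (∀ v : V, (∀ i < j, ∀ a ≤ 2 * ℓ + 1, v ≠ P i a) →
        (CoveredBy (symmDiff M {e | ∃ i < j, e ∈ PathEdges ℓ (P i)}) v ↔ CoveredBy M v)) ∧
      (∀ i < j, ∀ a ≤ 2 * ℓ + 1, ∃ e,
        e ∈ symmDiff M {e | ∃ i' < j, e ∈ PathEdges ℓ (P i')} ∧
        e ∈ {e | ∃ i' < j, e ∈ PathEdges ℓ (P i')} ∧ P i a ∈ e) := by
  intro j
  induction j with
  | zero =>
    intro _
    have h0 : {e : Sym2 V | ∃ i < 0, e ∈ PathEdges ℓ (P i)} = ∅ := by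
      ext e
      simp
    rw [h0, ← Set.bot_eq_empty, symmDiff_bot]
    refine ⟨hM, by simp, by simp, fun e _ => Iff.rfl, fun v _ => Iff.rfl, ?_⟩
    intro i hi
    omega
  | succ j ih =>
    intro hj
    obtain ⟨ihm, ihc, ihu, ihtr, ihcov, ihcover⟩ := ih (by omega)
    have hPj := hP j (by omega)
    have hUP : ∀ e ∈ PathEdges ℓ (P j), e ∉ {e | ∃ i < j, e ∈ PathEdges ℓ (P i)} := by
      rintro e ⟨a, ha, rfl⟩ ⟨i, hi, b, hb, heq⟩
      have hmem : P j a ∈ s(P i b, P i (b + 1)) := heq ▸ Sym2.mem_mk_left _ _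
      rcases Sym2.mem_iff.mp hmem with h | h
      · exact hdisj j (by omega) i (by omega) (by omega) a (by omega) b (by omega) h
      · exact hdisj j (by omega) i (by omega) (by omega) a (by omega) (b + 1) (by omega) h
    have hU'eq : {e : Sym2 V | ∃ i < j + 1, e ∈ PathEdges ℓ (P i)} =
        symmDiff {e | ∃ i < j, e ∈ PathEdges ℓ (P i)} (PathEdges ℓ (P j)) := by
      ext e
      rw [Set.mem_symmDiff]
      constructor
      · rintro ⟨i, hi, he⟩
        rcases Nat.lt_or_ge i j with h | h
        · refine Or.inl ⟨⟨i, h, he⟩, ?_⟩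
          intro hePj
          exact hUP e hePj ⟨i, h, he⟩
        · have : i = j := by omega
          subst this
          exact Or.inr ⟨he, hUP e he⟩
      · rintro (⟨⟨i, hi, he⟩, _⟩ | ⟨he, _⟩)
        · exact ⟨i, by omega, he⟩
        · exact ⟨j, by omega, he⟩
    have hMU' : symmDiff M {e : Sym2 V | ∃ i < j + 1, e ∈ PathEdges ℓ (P i)} =
        symmDiff (symmDiff M {e | ∃ i < j, e ∈ PathEdges ℓ (P i)}) (PathEdges ℓ (P j)) := by
      rw [hU'eq]
      exact (symmDiff_assoc M _ _).symm
    -- `P j` is an augmenting path for the intermediate matching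
    have hoffedge : ∀ a < 2 * ℓ + 1,
        s(P j a, P j (a + 1)) ∉ {e | ∃ i < j, e ∈ PathEdges ℓ (P i)} :=
      fun a ha => hUP _ ⟨a, ha, rfl⟩
    have hoffv : ∀ a ≤ 2 * ℓ + 1, ∀ i < j, ∀ b ≤ 2 * ℓ + 1, P j a ≠ P i b :=
      fun a ha i hi b hb =>
        hdisj j (by omega) i (by omega) (by omega) a ha b hb
    have hPjaug : IsAugPath G (symmDiff M {e | ∃ i < j, e ∈ PathEdges ℓ (P i)}) ℓ (P j) := by
      refine ⟨⟨hPj.1.1, ?_, ?_, ?_, ?_⟩, hPj.2⟩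
      · rw [ihcov (P j 0) (fun i hi a ha => hoffv 0 (by omega) i hi a ha)]
        exact hPj.1.2.1
      · rw [ihcov (P j (2 * ℓ + 1)) (fun i hi a ha => hoffv (2 * ℓ + 1) le_rfl i hi a ha)]
        exact hPj.1.2.2.1
      · intro i hi
        rw [ihtr _ (hoffedge (2 * i) hi)]
        exact hPj.1.2.2.2.1 i hi
      · intro i hi
        have := ihtr _ (hoffedge (2 * i + 1) hi)
        rw [show 2 * i + 1 + 1 = 2 * i + 2 by omega] at this
        rw [this]
        exact hPj.1.2.2.2.2 i hi
    refine ⟨?_, ?_, ?_, ?_, ?_, ?_⟩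
    · rw [hMU']
      exact augPath_matching ihm hPjaug
    · rw [hMU', augPath_ncard hPjaug, ihc]
      omega
    · rw [hU'eq]
      have hdisj' : Disjoint {e : Sym2 V | ∃ i < j, e ∈ PathEdges ℓ (P i)} (PathEdges ℓ (P j)) := by
        rw [Set.disjoint_left]
        intro e he hePj
        exact hUP e hePj he
      have hsd : symmDiff {e : Sym2 V | ∃ i < j, e ∈ PathEdges ℓ (P i)} (PathEdges ℓ (P j)) =
          {e : Sym2 V | ∃ i < j, e ∈ PathEdges ℓ (P i)} ∪ PathEdges ℓ (P j) := by
        ext e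
        rw [Set.mem_symmDiff, Set.mem_union]
        constructor
        · rintro (⟨h, _⟩ | ⟨h, _⟩)
          · exact Or.inl h
          · exact Or.inr h
        · rintro (h | h)
          · exact Or.inl ⟨h, fun h' => hUP e h' h⟩
          · exact Or.inr ⟨h, hUP e h⟩
      rw [hsd, Set.ncard_union_eq hdisj' (Set.toFinite _) (Set.toFinite _), ihu,
        pathEdges_ncard hPj.2]
      ring
    · intro e he
      rw [hMU']
      have hePj : e ∉ PathEdges ℓ (P j) := by
        intro h
        exact he ⟨j, by omega, h⟩
      rw [mem_sd_of_not_pathEdges hePj]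
      exact ihtr e (fun h => he (by obtain ⟨i, hi, h'⟩ := h; exact ⟨i, by omega, h'⟩))
    · intro v hv
      rw [hMU']
      have hvoff : ∀ a ≤ 2 * ℓ + 1, v ≠ P j a := fun a ha => hv j (by omega) a ha
      rw [covered_sd_of_off hvoff]
      exact ihcov v (fun i hi a ha => hv i (by omega) a ha)
    · intro i hi a ha
      rcases Nat.lt_or_ge i j with h | h
      · obtain ⟨e, heM, heU, hePa⟩ := ihcover i h a ha
        have hePj : e ∉ PathEdges ℓ (P j) := fun h' => hUP e h' heU
        refine ⟨e, ?_, ?_, hePa⟩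
        · rw [hMU', mem_sd_of_not_pathEdges hePj]
          exact heM
        · obtain ⟨i', hi', h'⟩ := heU
          exact ⟨i', by omega, h'⟩
      · have hij : i = j := by omega
        subst hij
        obtain ⟨e, heM, hePj, hePa⟩ := augPath_covers hPjaug ha
        refine ⟨e, ?_, ⟨i, by omega, hePj⟩, hePa⟩
        rw [hMU']
        exact heM

end Walk
end HK

/-- key invariant of Hopcroft–Karp: augmenting along a maximal collection of
vertex-disjoint shortest augmenting paths of length `2ℓ+1` (when no shorter augmenting path
exists) yields a matching with no augmenting path of length at most `2ℓ+1`. -/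
theorem stmt_11 {V : Type*} [Fintype V] (G : SimpleGraph V) (ℓ : ℕ)
    (M : Set (Sym2 V)) (hM : IsMatching G M)
    (hshort : ∀ k < ℓ, ∀ w : ℕ → V, ¬ IsAugPath G M k w)
    (m : ℕ) (P : ℕ → ℕ → V)
    (hP : ∀ i < m, IsAugPath G M ℓ (P i))
    (hdisj : ∀ i < m, ∀ j < m, i ≠ j →
      ∀ a ≤ 2 * ℓ + 1, ∀ b ≤ 2 * ℓ + 1, P i a ≠ P j b)
    (hmax : ∀ w : ℕ → V, IsAugPath G M ℓ w →
      ∃ i < m, ∃ a ≤ 2 * ℓ + 1, ∃ b ≤ 2 * ℓ + 1, w a = P i b)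
    (M' : Set (Sym2 V))
    (hM'def : M' = symmDiff M {e | ∃ i < m, e ∈ PathEdges ℓ (P i)}) :
    IsMatching G M' ∧ ∀ k ≤ ℓ, ∀ w : ℕ → V, ¬ IsAugPath G M' k w := by

  classical
  obtain ⟨hm1, hm2, hm3, hm4, hm5, hm6⟩ := HK.fam (G := G) ℓ hM m P hP hdisj m le_rfl
  rw [← hM'def] at hm1 hm2 hm4 hm5 hm6
  refine ⟨hm1, ?_⟩
  intro k hk w haug
  -- the augmented matching M'' = M' ∆ (edges of w)
  have hM''m : IsMatching G (symmDiff M' (PathEdges k w)) := HK.augPath_matching hm1 haug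
  have hM''c : (symmDiff M' (PathEdges k w)).ncard = M'.ncard + 1 := HK.augPath_ncard haug
  have hkey := HK.key (G := G) hM hshort (m + 1) (symmDiff M' (PathEdges k w)) hM''m
    (by omega)
  have hsd : symmDiff M (symmDiff M' (PathEdges k w)) =
      symmDiff {e | ∃ i < m, e ∈ PathEdges ℓ (P i)} (PathEdges k w) := by
    rw [hM'def, symmDiff_assoc, symmDiff_symmDiff_cancel_left]
  rw [hsd] at hkey
  -- cardinality bookkeeping
  have e1 := Set.ncard_inter_add_ncard_diff_eq_ncard
    {e : Sym2 V | ∃ i < m, e ∈ PathEdges ℓ (P i)} (PathEdges k w) (Set.toFinite _)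
  have e2 := Set.ncard_inter_add_ncard_diff_eq_ncard
    (PathEdges k w) {e : Sym2 V | ∃ i < m, e ∈ PathEdges ℓ (P i)} (Set.toFinite _)
  have e3 := HK.sd_ncard_split {e : Sym2 V | ∃ i < m, e ∈ PathEdges ℓ (P i)} (PathEdges k w)
  rw [Set.inter_comm] at e2
  have hPqn : (PathEdges k w).ncard = 2 * k + 1 := HK.pathEdges_ncard haug.2
  have hexp : (m + 1) * (2 * ℓ + 1) = m * (2 * ℓ + 1) + (2 * ℓ + 1) := by ring
  have hkl : k = ℓ := by omega
  have hUPq0 : ({e : Sym2 V | ∃ i < m, e ∈ PathEdges ℓ (P i)} ∩ PathEdges k w).ncard = 0 := by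
    omega
  have hUPqe : {e : Sym2 V | ∃ i < m, e ∈ PathEdges ℓ (P i)} ∩ PathEdges k w = ∅ :=
    (Set.ncard_eq_zero (Set.toFinite _)).mp hUPq0
  -- the path w is vertex-disjoint from all the paths P i
  have hvdisj : ∀ i < m, ∀ b ≤ 2 * ℓ + 1, ∀ a ≤ 2 * k + 1, w a ≠ P i b := by
    intro i hi b hb a ha heq
    obtain ⟨e, heM', heU, hePa⟩ := hm6 i hi b hb
    rcases Nat.eq_zero_or_pos a with rfl | hapos
    · exact haug.1.2.1 ⟨e, heM', heq ▸ hePa⟩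
    rcases eq_or_lt_of_le ha with haend | hain
    · exact haug.1.2.2.1 ⟨e, heM', by rw [← haend, heq]; exact hePa⟩
    · obtain ⟨i', hi', hodd', hmem⟩ := HK.incident_odd (k := k) (w := w) hapos (by omega)
      have hfM' : s(w i', w (i' + 1)) ∈ M' := HK.aug_odd_edges haug.1 i' hi' hodd'
      have hef : e = s(w i', w (i' + 1)) :=
        HK.matching_eq_of_mem hm1 heM' hfM' (v := w a) (heq ▸ hePa) hmem
      have : e ∈ {e : Sym2 V | ∃ i < m, e ∈ PathEdges ℓ (P i)} ∩ PathEdges k w :=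
        ⟨heU, hef ▸ ⟨i', hi', rfl⟩⟩
      rw [hUPqe] at this
      exact this
  subst hkl
  -- w is then an M-augmenting path of length 2ℓ+1
  have hQoff : ∀ e ∈ PathEdges k w, e ∉ {e : Sym2 V | ∃ i < m, e ∈ PathEdges k (P i)} := by
    rintro e ⟨a, ha, rfl⟩ ⟨i, hi, b, hb, heq⟩
    have hmem : w a ∈ s(P i b, P i (b + 1)) := heq ▸ Sym2.mem_mk_left _ _
    rcases Sym2.mem_iff.mp hmem with h | h
    · exact hvdisj i hi b (by omega) a (by omega) h
    · exact hvdisj i hi (b + 1) (by omega) a (by omega) h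
  have hQM : IsAugPath G M k w := by
    refine ⟨⟨haug.1.1, ?_, ?_, ?_, ?_⟩, haug.2⟩
    · intro hc
      exact haug.1.2.1 ((hm5 (w 0) (fun i hi a ha =>
        hvdisj i hi a ha 0 (by omega))).mpr hc)
    · intro hc
      exact haug.1.2.2.1 ((hm5 (w (2 * k + 1)) (fun i hi a ha =>
        hvdisj i hi a ha (2 * k + 1) le_rfl)).mpr hc)
    · intro i hi hc
      exact haug.1.2.2.2.1 i hi ((hm4 _ (hQoff _ ⟨2 * i, hi, rfl⟩)).mpr hc)
    · intro i hi
      have h' := haug.1.2.2.2.2 i hi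
      have hnot := hQoff _ (⟨2 * i + 1, hi, by rw [show 2 * i + 1 + 1 = 2 * i + 2 by omega]⟩ :
        s(w (2 * i + 1), w (2 * i + 2)) ∈ PathEdges k w)
      exact (hm4 _ hnot).mp h'
  obtain ⟨i, hi, a, ha, b, hb, heq⟩ := hmax w hQM
  exact hvdisj i hi b hb a ha heq
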